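/- Let Γ be a finite connected cubic G-vertex-transitive graph such that every abelian normal subgroup of G is semiregular on the vertices of Γ. Let N be a nontrivial abelian normal subgroup of G having at least three orbits on vertices, and suppose the normal quotient graph Γ/N is a cycle. Then G contains an element g that is semiregular on the vertices of Γ (the cyclic group ⟨g⟩ is semiregular) and whose order is at least |V(Γ)| / (2·|N|·|Aut(N)|). -/

import Mathlib

namespace Stmt18

/-- A set of permutations is semiregular if only the identity fixes a point. -/
def Semiregular {V : Type} (N : Subgroup (Equiv.Perm V)) : Prop :=
  ∀ n ∈ N, ∀ v : V, n v = v → n = 1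

/-- The normal quotient graph `Γ/N`: vertices are the `N`-orbits, two distinct orbits
being adjacent iff some vertex of one is adjacent in `Γ` to some vertex of the other. -/
def quotGraph {V : Type} (Γ : SimpleGraph V) (N : Subgroup (Equiv.Perm V)) :
    SimpleGraph (Quotient (MulAction.orbitRel (↥N) V)) :=
  SimpleGraph.fromRel (fun a b => ∃ u v : V,
    Quotient.mk (MulAction.orbitRel (↥N) V) u = a ∧
    Quotient.mk (MulAction.orbitRel (↥N) V) v = b ∧ Γ.Adj u v)

open Equiv MulAction
open Fin.CommRing

section Quot

variable {V : Type} {G N : Subgroup (Equiv.Perm V)}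

lemma orbitRel_iff {u v : V} :
    (MulAction.orbitRel (↥N) V) u v ↔ ∃ n ∈ N, n v = u := by
  change u ∈ MulAction.orbit (↥N) v ↔ _
  rw [MulAction.mem_orbit_iff]
  constructor
  · rintro ⟨⟨n, hn⟩, h⟩; exact ⟨n, hn, h⟩
  · rintro ⟨n, hn, h⟩; exact ⟨⟨n, hn⟩, h⟩

lemma rel_map (hNnormal : ∀ g ∈ G, ∀ n ∈ N, g * n * g⁻¹ ∈ N)
    {g : Equiv.Perm V} (hg : g ∈ G) {u v : V}
    (h : (MulAction.orbitRel (↥N) V) u v) :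
    (MulAction.orbitRel (↥N) V) (g u) (g v) := by
  rw [orbitRel_iff] at h ⊢
  obtain ⟨n, hn, rfl⟩ := h
  exact ⟨g * n * g⁻¹, hNnormal g hg n hn, by simp⟩

variable (hNnormal : ∀ g ∈ G, ∀ n ∈ N, g * n * g⁻¹ ∈ N)

/-- Permutation of the orbit space induced by `g ∈ G`. -/
def quotPerm (g : ↥G) : Equiv.Perm (Quotient (MulAction.orbitRel (↥N) V)) where
  toFun := Quotient.map (g : Equiv.Perm V) (fun _ _ h => rel_map hNnormal g.2 h)
  invFun := Quotient.map (↑(g⁻¹) : Equiv.Perm V) (fun _ _ h => rel_map hNnormal (g⁻¹).2 h)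
  left_inv := by
    rintro ⟨v⟩
    show Quotient.map _ _ (Quotient.map _ _ (Quotient.mk _ v)) = Quotient.mk _ v
    simp [Quotient.map_mk]
  right_inv := by
    rintro ⟨v⟩
    show Quotient.map _ _ (Quotient.map _ _ (Quotient.mk _ v)) = Quotient.mk _ v
    simp [Quotient.map_mk]

@[simp] lemma quotPerm_mk (g : ↥G) (v : V) :
    quotPerm hNnormal g (Quotient.mk (MulAction.orbitRel (↥N) V) v)
      = Quotient.mk _ ((g : Equiv.Perm V) v) := rfl

/-- The homomorphism `G → Perm (V/N)`. -/
def quotHom : ↥G →* Equiv.Perm (Quotient (MulAction.orbitRel (↥N) V)) where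
  toFun := quotPerm hNnormal
  map_one' := by ext q; induction q using Quotient.ind; rfl
  map_mul' g h := by ext q; induction q using Quotient.ind; rfl

@[simp] lemma quotHom_mk (g : ↥G) (v : V) :
    quotHom hNnormal g (Quotient.mk (MulAction.orbitRel (↥N) V) v)
      = Quotient.mk _ ((g : Equiv.Perm V) v) := rfl

/-- Conjugation of permutation groups along an equivalence, as a monoid hom. -/
def permCongrHom {α β : Type} (e : α ≃ β) : Equiv.Perm α →* Equiv.Perm β where
  toFun := e.permCongr
  map_one' := by ext x; simp
  map_mul' f g := by ext x; simp [Equiv.permCongr]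

lemma permCongrHom_injective {α β : Type} (e : α ≃ β) :
    Function.Injective (permCongrHom e) := e.permCongr.injective

/-- Conjugation by an element of `G` as an automorphism of `N`. -/
def conjAut (g : Equiv.Perm V) (hg : g ∈ G) : MulAut ↥N where
  toFun n := ⟨g * ↑n * g⁻¹, hNnormal g hg ↑n n.2⟩
  invFun n := ⟨g⁻¹ * ↑n * g, by
    have := hNnormal g⁻¹ (G.inv_mem hg) ↑n n.2
    simpa using this⟩
  left_inv n := by ext; simp [mul_assoc]
  right_inv n := by ext; simp [mul_assoc]
  map_mul' a b := by ext; simp [mul_assoc]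

lemma conjAut_pow (g : Equiv.Perm V) (hg : g ∈ G) (j : ℕ) (n : ↥N) :
    (((conjAut hNnormal g hg ^ j) n : ↥N) : Equiv.Perm V) = g^j * ↑n * (g^j)⁻¹ := by
  induction j with
  | zero => simp
  | succ j ih =>
    rw [pow_succ', MulAut.mul_apply]
    show (g * ↑((conjAut hNnormal g hg ^ j) n) * g⁻¹ : Equiv.Perm V) = _
    rw [ih, pow_succ']
    group

end Quot

section Cycle

variable {k : ℕ}

instance finAddCyclic : IsAddCyclic (Fin (k+3)) := by
  constructor
  refine ⟨1, fun x => ⟨(x.val : ℤ), ?_⟩⟩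
  push_cast [zsmul_eq_mul, mul_one]
  rfl

lemma two_ne_zero' : ((1:Fin (k+3)) + 1) ≠ 0 := by
  intro h
  have := congrArg Fin.val h
  simp [Fin.add_def, Nat.mod_eq_of_lt] at this

variable (f : Equiv.Perm (Fin (k+3)))
  (hf : ∀ x y, (SimpleGraph.cycleGraph (k+3)).Adj (f x) (f y) ↔
    (SimpleGraph.cycleGraph (k+3)).Adj x y)
include hf

lemma step_lemma (x : Fin (k+3)) : f (x+1) = f x + 1 ∨ f (x+1) = f x - 1 := by
  have h : (SimpleGraph.cycleGraph (k+3)).Adj (f x) (f (x+1)) := by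
    rw [hf, SimpleGraph.cycleGraph_adj]
    right; simp
  rw [SimpleGraph.cycleGraph_adj] at h
  rcases h with h | h
  · right; linear_combination -h
  · left; linear_combination h

lemma const_plus {x : Fin (k+3)} (hx : f (x+1) = f x + 1) : f (x+1+1) = f (x+1) + 1 := by
  rcases step_lemma f hf (x+1) with h | h
  · exact h
  · exfalso
    have h2 : f (x+1+1) = f x := by rw [h, hx]; ring
    have h3 : x + 1 + 1 = x := f.injective h2
    exact two_ne_zero' (by linear_combination h3)

lemma const_minus {x : Fin (k+3)} (hx : f (x+1) = f x - 1) : f (x+1+1) = f (x+1) - 1 := by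
  rcases step_lemma f hf (x+1) with h | h
  · exfalso
    have h2 : f (x+1+1) = f x := by rw [h, hx]; ring
    have h3 : x + 1 + 1 = x := f.injective h2
    exact two_ne_zero' (by linear_combination h3)
  · exact h

lemma affine : (∀ x, f x = f 0 + x) ∨ (∀ x, f x = f 0 - x) := by
  rcases step_lemma f hf 0 with h0 | h0
  · left
    have key : ∀ n : ℕ, f ((n:Fin (k+3))+1) = f n + 1 := by
      intro n
      induction n with
      | zero => simpa using h0
      | succ n ih =>
        have := const_plus f hf ih
        simpa [Nat.cast_add] using this
    have key2 : ∀ n : ℕ, f (n:Fin (k+3)) = f 0 + (n:Fin (k+3)) := by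
      intro n
      induction n with
      | zero => simp
      | succ n ih =>
        have := key n
        rw [ih] at this
        simpa [Nat.cast_add, add_assoc] using this
    intro x
    conv_lhs => rw [← Fin.cast_val_eq_self x]
    rw [key2, Fin.cast_val_eq_self]
  · right
    have key : ∀ n : ℕ, f ((n:Fin (k+3))+1) = f n - 1 := by
      intro n
      induction n with
      | zero => simpa using h0
      | succ n ih =>
        have := const_minus f hf ih
        simpa [Nat.cast_add] using this
    have key2 : ∀ n : ℕ, f (n:Fin (k+3)) = f 0 - (n:Fin (k+3)) := by
      intro n
      induction n with
      | zero => simp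
      | succ n ih =>
        have := key n
        rw [ih] at this
        rw [Nat.cast_add, Nat.cast_one, this]
        ring
    intro x
    conv_lhs => rw [← Fin.cast_val_eq_self x]
    rw [key2, Fin.cast_val_eq_self]

end Cycle


theorem stmt18 {V : Type} [Fintype V] (Γ : SimpleGraph V)
    (hconn : Γ.Connected)
    (hcubic : ∀ v : V, (Γ.neighborSet v).ncard = 3)
    (G : Subgroup (Equiv.Perm V))
    (hAut : ∀ g ∈ G, ∀ u v : V, Γ.Adj (g u) (g v) ↔ Γ.Adj u v)
    (hTrans : ∀ u v : V, ∃ g ∈ G, g u = v)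
    (hallsemi : ∀ N : Subgroup (Equiv.Perm V), N ≤ G →
      (∀ g ∈ G, ∀ n ∈ N, g * n * g⁻¹ ∈ N) →
      (∀ a ∈ N, ∀ b ∈ N, a * b = b * a) → Semiregular N)
    (N : Subgroup (Equiv.Perm V)) (hNG : N ≤ G) (hNne : N ≠ ⊥)
    (hNnormal : ∀ g ∈ G, ∀ n ∈ N, g * n * g⁻¹ ∈ N)
    (hNab : ∀ a ∈ N, ∀ b ∈ N, a * b = b * a)
    (horb : 3 ≤ Nat.card (Quotient (MulAction.orbitRel (↥N) V)))
    (hcycle : ∃ m : ℕ, 3 ≤ m ∧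
      Nonempty (quotGraph Γ N ≃g SimpleGraph.cycleGraph m)) :
    ∃ g ∈ G,
      (∀ h ∈ Subgroup.zpowers g, ∀ v : V, h v = v → h = 1) ∧
      Fintype.card V ≤ 2 * Nat.card ↥N * Nat.card (MulAut ↥N) * orderOf g := by
  classical
  obtain ⟨m, hm3, ⟨iso⟩⟩ := hcycle
  obtain ⟨k, rfl⟩ : ∃ k, m = k + 3 := ⟨m - 3, by omega⟩
  have hNsemi : Semiregular N := hallsemi N hNG hNnormal hNab
  set Q := Quotient (MulAction.orbitRel (↥N) V) with hQdef
  let e : Q ≃ Fin (k+3) := iso.toEquiv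
  have he : ∀ q q' : Q, (quotGraph Γ N).Adj q q' ↔
      (SimpleGraph.cycleGraph (k+3)).Adj (e q) (e q') :=
    fun q q' => iso.map_adj_iff.symm
  let π : ↥G →* Equiv.Perm Q := quotHom hNnormal
  let ψ : ↥G →* Equiv.Perm (Fin (k+3)) := (permCongrHom e).comp π
  have hψ_mk : ∀ (g : ↥G) (v : V), ψ g (e (Quotient.mk _ v)) =
      e (Quotient.mk _ ((g : Equiv.Perm V) v)) := by
    intro g v
    show e.permCongr (π g) (e (Quotient.mk _ v)) = _
    rw [Equiv.permCongr_apply, Equiv.symm_apply_apply]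
    rfl
  -- G acts on the quotient graph by automorphisms
  have hπAdjAux : ∀ (g : ↥G) (q q' : Q), (quotGraph Γ N).Adj q q' →
      (quotGraph Γ N).Adj (π g q) (π g q') := by
    intro g q q'
    refine Quotient.inductionOn₂ q q' (fun u v h => ?_)
    have hmk : ∀ w : V, π g (Quotient.mk (MulAction.orbitRel (↥N) V) w)
        = Quotient.mk _ ((g : Equiv.Perm V) w) := fun w => rfl
    rw [quotGraph, SimpleGraph.fromRel_adj] at h
    rw [hmk, hmk, quotGraph, SimpleGraph.fromRel_adj]
    obtain ⟨hne, hrel⟩ := h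
    constructor
    · intro heq
      apply hne
      have h1 := Quotient.exact heq
      have h2 := rel_map hNnormal (G.inv_mem g.2) h1
      apply Quotient.sound
      simpa using h2
    · have key : ∀ x y : V,
          (∃ u' v' : V, Quotient.mk (MulAction.orbitRel (↥N) V) u' = Quotient.mk _ x ∧
            Quotient.mk (MulAction.orbitRel (↥N) V) v' = Quotient.mk _ y ∧ Γ.Adj u' v') →
          (∃ u' v' : V, Quotient.mk (MulAction.orbitRel (↥N) V) u'
              = Quotient.mk _ ((g : Equiv.Perm V) x) ∧
            Quotient.mk (MulAction.orbitRel (↥N) V) v'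
              = Quotient.mk _ ((g : Equiv.Perm V) y) ∧ Γ.Adj u' v') := by
        rintro x y ⟨u', v', hu, hv, hadj⟩
        exact ⟨(g : Equiv.Perm V) u', (g : Equiv.Perm V) v',
          Quotient.sound (rel_map hNnormal g.2 (Quotient.exact hu)),
          Quotient.sound (rel_map hNnormal g.2 (Quotient.exact hv)),
          (hAut ↑g g.2 u' v').mpr hadj⟩
      rcases hrel with h | h
      · exact Or.inl (key _ _ h)
      · exact Or.inr (key _ _ h)
  have hπAdj : ∀ (g : ↥G) (q q' : Q),
      (quotGraph Γ N).Adj (π g q) (π g q') ↔ (quotGraph Γ N).Adj q q' := by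
    intro g q q'
    constructor
    · intro h
      have := hπAdjAux g⁻¹ _ _ h
      have hq : ∀ r : Q, π g⁻¹ (π g r) = r := by
        intro r
        rw [← Equiv.Perm.mul_apply, ← map_mul, inv_mul_cancel, map_one, Equiv.Perm.one_apply]
      rwa [hq, hq] at this
    · exact hπAdjAux g q q'
  have hψAdj : ∀ (g : ↥G) (x y : Fin (k+3)),
      (SimpleGraph.cycleGraph (k+3)).Adj (ψ g x) (ψ g y) ↔
      (SimpleGraph.cycleGraph (k+3)).Adj x y := by
    intro g x y
    show (SimpleGraph.cycleGraph (k+3)).Adj (e.permCongr (π g) x) (e.permCongr (π g) y) ↔ _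
    rw [Equiv.permCongr_apply, Equiv.permCongr_apply, ← he, hπAdj, he,
      Equiv.apply_symm_apply, Equiv.apply_symm_apply]
  -- the image subgroup H and the sign homomorphism
  set H : Subgroup (Equiv.Perm (Fin (k+3))) := ψ.range with hHdef
  set Pos : Equiv.Perm (Fin (k+3)) → Prop := fun f => ∀ x, f x = f 0 + x with hPos
  set Neg : Equiv.Perm (Fin (k+3)) → Prop := fun f => ∀ x, f x = f 0 - x with hNeg
  have hPN : ∀ f : ↥H, Pos ↑f ∨ Neg ↑f := by
    rintro ⟨f, g, rfl⟩
    exact affine _ (hψAdj g)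
  have hPnotN : ∀ f, Pos f → Neg f → False := by
    intro f hp hn
    have h1 := hp 1
    have h2 := hn 1
    rw [h1] at h2
    exact two_ne_zero' (by linear_combination h2)
  have hPP : ∀ f g, Pos f → Pos g → Pos (f * g) := by
    intro f g hf hg x
    show f (g x) = f (g 0) + x
    rw [hg x, hf (g 0 + x), hf (g 0)]
    ring
  have hPM : ∀ f g, Pos f → Neg g → Neg (f * g) := by
    intro f g hf hg x
    show f (g x) = f (g 0) - x
    rw [hg x, hf (g 0 - x), hf (g 0)]
    ring
  have hMP : ∀ f g, Neg f → Pos g → Neg (f * g) := by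
    intro f g hf hg x
    show f (g x) = f (g 0) - x
    rw [hg x, hf (g 0 + x), hf (g 0)]
    ring
  have hMM : ∀ f g, Neg f → Neg g → Pos (f * g) := by
    intro f g hf hg x
    show f (g x) = f (g 0) + x
    rw [hg x, hf (g 0 - x), hf (g 0)]
    ring
  let sgn : ↥H →* ℤˣ :=
    { toFun := fun f => if Pos ↑f then 1 else -1
      map_one' := by
        rw [if_pos]
        intro x
        show x = (1 : Equiv.Perm (Fin (k+3))) 0 + x
        simp
      map_mul' := by
        intro f g
        have hco : ((f*g : ↥H) : Equiv.Perm (Fin (k+3))) = ↑f * ↑g := rfl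
        rw [hco]
        rcases hPN f with hf | hf <;> rcases hPN g with hg | hg
        · rw [if_pos hf, if_pos hg, if_pos (by exact hPP _ _ hf hg), mul_one]
        · rw [if_pos hf, if_neg (fun hp => hPnotN _ hp hg),
            if_neg (fun hp => hPnotN _ hp (hPM _ _ hf hg)), one_mul]
        · rw [if_neg (fun hp => hPnotN _ hp hf), if_pos hg,
            if_neg (fun hp => hPnotN _ hp (hMP _ _ hf hg)), mul_one]
        · rw [if_neg (fun hp => hPnotN _ hp hf), if_neg (fun hp => hPnotN _ hp hg),
            if_pos (by exact hMM _ _ hf hg)]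
          norm_num }
  set K : Subgroup ↥H := sgn.ker with hKdef
  have hKpos : ∀ f : ↥K, Pos ((f : ↥H) : Equiv.Perm (Fin (k+3))) := by
    intro f
    have h1 : sgn f.1 = 1 := f.2
    by_contra hnp
    have : sgn f.1 = -1 := by
      show (if Pos ((f : ↥H) : Equiv.Perm (Fin (k+3))) then (1:ℤˣ) else -1) = -1
      rw [if_neg hnp]
    rw [this] at h1
    exact absurd h1 (by decide)
  -- K is cyclic: embed into Fin (k+3)
  let φ : ↥K →* Multiplicative (Fin (k+3)) :=
    { toFun := fun f => Multiplicative.ofAdd (((f : ↥H) : Equiv.Perm (Fin (k+3))) 0)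
      map_one' := rfl
      map_mul' := by
        intro f g
        show Multiplicative.ofAdd ((((f*g : ↥K) : ↥H) : Equiv.Perm (Fin (k+3))) 0) = _
        have : (((f*g : ↥K) : ↥H) : Equiv.Perm (Fin (k+3))) 0 =
            ((f : ↥H) : Equiv.Perm (Fin (k+3))) 0 + ((g : ↥H) : Equiv.Perm (Fin (k+3))) 0 := by
          show ((f : ↥H) : Equiv.Perm (Fin (k+3))) (((g : ↥H) : Equiv.Perm (Fin (k+3))) 0) = _
          rw [hKpos f _]
        rw [this]
        rfl }
  have hφinj : Function.Injective φ := by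
    intro f g hfg
    have h0 : ((f : ↥H) : Equiv.Perm (Fin (k+3))) 0 = ((g : ↥H) : Equiv.Perm (Fin (k+3))) 0 :=
      hfg
    ext x
    rw [hKpos f x, hKpos g x, h0]
  obtain ⟨t', ht'⟩ := IsCyclic.exists_ofOrder_eq_natCard (α := ↥φ.range)
  have hcardR : Nat.card ↥φ.range = Nat.card ↥K :=
    (Nat.card_congr (MonoidHom.ofInjective hφinj).toEquiv).symm
  obtain ⟨t, htK⟩ := t'.2
  have hordt : orderOf t = Nat.card ↥K := by
    have h1 : orderOf t = orderOf (φ t) := (orderOf_injective φ hφinj t).symm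
    have h2 : orderOf ((t' : Multiplicative (Fin (k+3)))) = orderOf t' :=
      orderOf_injective φ.range.subtype φ.range.subtype_injective t'
    rw [h1, htK, h2, ht', hcardR]
  set ρ : Equiv.Perm (Fin (k+3)) := ((t : ↥H) : Equiv.Perm (Fin (k+3))) with hρdef
  have hordρ : orderOf ρ = Nat.card ↥K := by
    rw [← hordt]
    rw [show ρ = H.subtype (K.subtype t) from rfl]
    rw [orderOf_injective H.subtype H.subtype_injective,
      orderOf_injective K.subtype K.subtype_injective]
  have hρPos : Pos ρ := hKpos t
  obtain ⟨g₀, hg₀⟩ : ∃ g₀ : ↥G, ψ g₀ = ρ := (t : ↥H).2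
  -- cardinality facts
  set s : ℕ := Nat.card ↥K with hsdef
  have hHcard : k+3 ≤ Nat.card ↥H := by
    have hsurj : Function.Surjective (fun f : ↥H => (f : Equiv.Perm (Fin (k+3))) 0) := by
      intro y
      obtain ⟨g, hgG, hguv⟩ := hTrans (Quotient.out (e.symm 0)) (Quotient.out (e.symm y))
      refine ⟨⟨ψ ⟨g, hgG⟩, ⟨g, hgG⟩, rfl⟩, ?_⟩
      show ψ ⟨g, hgG⟩ 0 = y
      have h0 : (0 : Fin (k+3)) = e (Quotient.mk _ (Quotient.out (e.symm 0))) := by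
        rw [Quotient.out_eq, Equiv.apply_symm_apply]
      rw [h0, hψ_mk]
      show e (Quotient.mk _ (g (Quotient.out (e.symm 0)))) = y
      rw [hguv, Quotient.out_eq, Equiv.apply_symm_apply]
    have := Nat.card_le_card_of_surjective _ hsurj
    simpa using this
  have hHK : Nat.card ↥H ≤ 2 * s := by
    have h1 : K.index * Nat.card ↥K = Nat.card ↥H := Subgroup.index_mul_card K
    have h2 : K.index = Nat.card ↥sgn.range := Subgroup.index_ker sgn
    have h3 : Nat.card ↥sgn.range ≤ Nat.card ℤˣ := Subgroup.card_le_card_group _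
    have h4 : Nat.card ℤˣ = 2 := by simp [Nat.card_eq_fintype_card]
    calc Nat.card ↥H = K.index * s := h1.symm
    _ ≤ 2 * s := Nat.mul_le_mul_right s (by omega)
  have hks : k+3 ≤ 2 * s := le_trans hHcard hHK
  have hVcard : Fintype.card V = (k+3) * Nat.card ↥N := by
    have orbEquiv : ∀ b : V, ↥(MulAction.orbit (↥N) b) ≃ ↥N := by
      intro b
      refine (Equiv.ofBijective (fun n : ↥N => ⟨n • b, MulAction.mem_orbit b n⟩) ⟨?_, ?_⟩).symm
      · intro n n' hnn
        have h1 : (n : Equiv.Perm V) b = (n' : Equiv.Perm V) b := by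
          have := congrArg Subtype.val hnn
          simpa [Subgroup.smul_def, Equiv.Perm.smul_def] using this
        have h2 : ((n' : Equiv.Perm V)⁻¹ * (n : Equiv.Perm V)) b = b := by
          show (n' : Equiv.Perm V)⁻¹ ((n : Equiv.Perm V) b) = b
          rw [h1]; simp
        have h3 := hNsemi _ (N.mul_mem (N.inv_mem n'.2) n.2) b h2
        have h4 : (n' : Equiv.Perm V) = (n : Equiv.Perm V) := inv_mul_eq_one.mp h3
        exact Subtype.ext h4.symm
      · rintro ⟨x, hx⟩
        obtain ⟨n, hn⟩ := hx
        exact ⟨n, Subtype.ext hn⟩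
    have equivFull : V ≃ (MulAction.orbitRel.Quotient (↥N) V × ↥N) :=
      (MulAction.selfEquivSigmaOrbits (↥N) V).trans
        ((Equiv.sigmaCongrRight (fun ω => orbEquiv _)).trans (Equiv.sigmaEquivProd _ _))
    have h1 : Nat.card V = Nat.card (MulAction.orbitRel.Quotient (↥N) V) * Nat.card ↥N := by
      rw [Nat.card_congr equivFull, Nat.card_prod]
    have h2 : Nat.card (MulAction.orbitRel.Quotient (↥N) V) = k + 3 := by
      show Nat.card Q = k + 3
      rw [Nat.card_congr e, Nat.card_eq_fintype_card, Fintype.card_fin]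
    rw [← Nat.card_eq_fintype_card, h1, h2]
  -- the candidate element
  set a : ℕ := Nat.card (MulAut ↥N) with hadef
  have ha : 0 < a := Nat.card_pos
  have hcomm : ∀ n ∈ N, (↑g₀ : Equiv.Perm V)^a * n = n * (↑g₀ : Equiv.Perm V)^a := by
    intro n hn
    have hσa : (conjAut hNnormal ↑g₀ g₀.2) ^ a = 1 := by
      rw [hadef]; exact pow_card_eq_one'
    have := conjAut_pow hNnormal (↑g₀ : Equiv.Perm V) g₀.2 a ⟨n, hn⟩
    rw [hσa] at this
    simp only [MulAut.one_apply] at this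
    calc (↑g₀:Equiv.Perm V)^a * n = ((↑g₀:Equiv.Perm V)^a * n * ((↑g₀:Equiv.Perm V)^a)⁻¹) *
          (↑g₀:Equiv.Perm V)^a := by group
    _ = n * (↑g₀:Equiv.Perm V)^a := by rw [this.symm]
  -- key: powers of g₀ fixing a vertex fix all orbits
  have horbfix : ∀ j : ℤ, ∀ v : V, ((↑g₀ : Equiv.Perm V) ^ j) v = v →
      ∀ w : V, Quotient.mk (MulAction.orbitRel (↥N) V) (((↑g₀ : Equiv.Perm V)^j) w)
        = Quotient.mk _ w := by
    intro j v hv w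
    have hcoe : ((g₀ ^ j : ↥G) : Equiv.Perm V) = (↑g₀ : Equiv.Perm V)^j := by
      rw [Subgroup.coe_zpow]
    have hψj : ψ (g₀ ^ j) = ρ ^ j := by rw [map_zpow, hg₀]
    have hρeq : ρ = Equiv.addLeft (ρ 0) := by
      ext x; rw [hρPos x]; rfl
    have hρj : ρ ^ j = Equiv.addLeft (j • ρ 0) := by
      conv_lhs => rw [hρeq]
      have key : ∀ j : ℤ, Equiv.addLeft (ρ 0) ^ j = Equiv.addLeft (j • ρ 0) := by
        intro j
        induction j using Int.induction_on with
        | zero => simp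
        | succ n ih => rw [zpow_add_one, ih]; ext x; simp [add_smul, add_assoc]
        | pred n ih => rw [zpow_sub_one, ih]; ext x; simp [sub_smul, sub_eq_add_neg, add_comm, add_left_comm]; congr 1; ring
      exact key j
    have h1 : ψ (g₀ ^ j) (e (Quotient.mk _ v))
        = e (Quotient.mk _ (((g₀ ^ j : ↥G) : Equiv.Perm V) v)) := hψ_mk _ v
    rw [hcoe, hv, hψj, hρj] at h1
    have h2 : j • ρ 0 = 0 := by
      have h1' : (j • ρ 0) + e (Quotient.mk _ v) = (0 : Fin (k+3)) + e (Quotient.mk _ v) := by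
        rw [zero_add]; exact h1
      exact add_right_cancel h1'
    have hρj1 : ρ ^ j = 1 := by rw [hρj, h2, Equiv.addLeft_zero]
    have hπ1 : π (g₀ ^ j) = 1 := by
      apply permCongrHom_injective e
      show (permCongrHom e) (π (g₀ ^ j)) = permCongrHom e 1
      rw [map_one]
      exact hψj.trans hρj1
    have h3 := congrArg (fun p : Equiv.Perm Q => p (Quotient.mk _ w)) hπ1
    simp only [Equiv.Perm.one_apply] at h3
    have h4 : π (g₀ ^ j) (Quotient.mk _ w)
        = Quotient.mk (MulAction.orbitRel (↥N) V) (((g₀ ^ j : ↥G) : Equiv.Perm V) w) := rfl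
    rw [h4, hcoe] at h3
    exact h3
  -- the abelian normal subgroup L
  set L : Subgroup (Equiv.Perm V) :=
    { carrier := {f | f ∈ G ∧ (∀ n ∈ N, f * n = n * f) ∧
        ∀ v : V, Quotient.mk (MulAction.orbitRel (↥N) V) (f v) = Quotient.mk _ v}
      mul_mem' := by
        rintro f f' ⟨hfG, hfc, hfo⟩ ⟨hf'G, hf'c, hf'o⟩
        refine ⟨G.mul_mem hfG hf'G, fun n hn => ?_, fun v => ?_⟩
        · rw [mul_assoc, hf'c n hn, ← mul_assoc, hfc n hn, mul_assoc]
        · show Quotient.mk _ (f (f' v)) = _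
          rw [hfo (f' v), hf'o v]
      one_mem' := ⟨G.one_mem, fun n _ => by rw [one_mul, mul_one], fun v => rfl⟩
      inv_mem' := by
        rintro f ⟨hfG, hfc, hfo⟩
        refine ⟨G.inv_mem hfG, fun n hn => ?_, fun v => ?_⟩
        · have := hfc n hn
          calc f⁻¹ * n = f⁻¹ * n * f * f⁻¹ := by group
          _ = f⁻¹ * (f * n) * f⁻¹ := by rw [mul_assoc f⁻¹ n f, ← this]
          _ = n * f⁻¹ := by group
        · have := hfo (f⁻¹ v)
          simp only [Equiv.Perm.coe_inv, Equiv.apply_symm_apply] at this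
          exact this.symm } with hLdef
  have hLsemi : Semiregular L := by
    apply hallsemi L
    · intro f hf; exact hf.1
    · rintro g hg f ⟨hfG, hfc, hfo⟩
      refine ⟨G.mul_mem (G.mul_mem hg hfG) (G.inv_mem hg), fun n hn => ?_, fun v => ?_⟩
      · have hn' : g⁻¹ * n * g ∈ N := by
          have := hNnormal g⁻¹ (G.inv_mem hg) n hn
          simpa using this
        have := hfc _ hn'
        calc g * f * g⁻¹ * n = g * (f * (g⁻¹ * n * g)) * g⁻¹ := by group
        _ = g * ((g⁻¹ * n * g) * f) * g⁻¹ := by rw [this]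
        _ = n * (g * f * g⁻¹) := by group
      · show Quotient.mk _ (g (f (g⁻¹ v))) = _
        have h1 := hfo (g⁻¹ v)
        have h2 := Quotient.exact h1
        have h3 := rel_map hNnormal hg h2
        have h4 : Quotient.mk (MulAction.orbitRel (↥N) V) (g (f (g⁻¹ v)))
            = Quotient.mk _ (g (g⁻¹ v)) := Quotient.sound h3
        simpa using h4
    · rintro f ⟨hfG, hfc, hfo⟩ f' ⟨hf'G, hf'c, hf'o⟩
      ext v
      show f (f' v) = f' (f v)
      obtain ⟨n1, hn1, hv1⟩ := orbitRel_iff.mp (Quotient.exact (hfo v))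
      obtain ⟨n2, hn2, hv2⟩ := orbitRel_iff.mp (Quotient.exact (hf'o v))
      calc f (f' v) = f (n2 v) := by rw [hv2]
      _ = (f * n2) v := rfl
      _ = (n2 * f) v := by rw [hfc n2 hn2]
      _ = n2 (f v) := rfl
      _ = n2 (n1 v) := by rw [hv1]
      _ = (n2 * n1) v := rfl
      _ = (n1 * n2) v := by rw [hNab n2 hn2 n1 hn1]
      _ = n1 (n2 v) := rfl
      _ = n1 (f' v) := by rw [hv2]
      _ = (n1 * f') v := rfl
      _ = (f' * n1) v := by rw [hf'c n1 hn1]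
      _ = f' (n1 v) := rfl
      _ = f' (f v) := by rw [hv1]
  -- assemble
  refine ⟨(↑g₀ : Equiv.Perm V) ^ a, G.pow_mem g₀.2 a, ?_, ?_⟩
  · intro h hh v hv
    obtain ⟨z, rfl⟩ := Subgroup.mem_zpowers_iff.mp hh
    have hrw : ((↑g₀ : Equiv.Perm V) ^ a) ^ z = (↑g₀ : Equiv.Perm V) ^ ((a : ℤ) * z) := by
      rw [← zpow_natCast, ← zpow_mul]
    rw [hrw] at hv ⊢
    apply hLsemi _ _ v hv
    refine ⟨G.zpow_mem g₀.2 _, fun n hn => ?_, horbfix _ v hv⟩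
    · have : Commute ((↑g₀ : Equiv.Perm V)^a) n := hcomm n hn
      have := (this.zpow_left z)
      rw [hrw] at this
      exact this
  · -- order bound
    have hdvd : orderOf (ρ ^ a) ∣ orderOf ((↑g₀ : Equiv.Perm V) ^ a) := by
      have h1 : orderOf ((↑g₀ : Equiv.Perm V) ^ a) = orderOf ((g₀ : ↥G) ^ a) := by
        rw [show (↑g₀ : Equiv.Perm V) ^ a = G.subtype (g₀ ^ a) by simp,
          orderOf_injective G.subtype G.subtype_injective]
      have h2 : ρ ^ a = ψ (g₀ ^ a) := by rw [map_pow, hg₀]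
      rw [h1, h2]
      exact orderOf_map_dvd ψ (g₀ ^ a)
    have hord : s / Nat.gcd s a ≤ orderOf ((↑g₀ : Equiv.Perm V) ^ a) := by
      have hpos : 0 < orderOf ((↑g₀ : Equiv.Perm V) ^ a) := orderOf_pos _
      have heq : orderOf (ρ ^ a) = s / Nat.gcd s a := by rw [orderOf_pow, hordρ]
      rw [← heq]
      exact Nat.le_of_dvd hpos hdvd
    have hgcd : Nat.gcd s a ≤ a := Nat.le_of_dvd ha (Nat.gcd_dvd_right s a)
    have hsplit : Nat.gcd s a * (s / Nat.gcd s a) = s := Nat.mul_div_cancel' (Nat.gcd_dvd_left s a)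
    have hfin : k + 3 ≤ 2 * (a * orderOf ((↑g₀ : Equiv.Perm V) ^ a)) := by
      calc k + 3 ≤ 2 * s := hks
      _ = 2 * (Nat.gcd s a * (s / Nat.gcd s a)) := by rw [hsplit]
      _ ≤ 2 * (a * orderOf ((↑g₀ : Equiv.Perm V) ^ a)) :=
          Nat.mul_le_mul_left 2 (Nat.mul_le_mul hgcd hord)
    calc Fintype.card V = (k+3) * Nat.card ↥N := hVcard
    _ ≤ (2 * (a * orderOf ((↑g₀ : Equiv.Perm V) ^ a))) * Nat.card ↥N :=
        Nat.mul_le_mul_right _ hfin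
    _ = 2 * Nat.card ↥N * a * orderOf ((↑g₀ : Equiv.Perm V) ^ a) := by ring
end Stmt18
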